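/- If k is odd, then for all integers q and r: x_{k,q,r} = x_{k−1,q−1,r−1}. -/

import Mathlib

/-- A quandle as in the paper: a set with operations `▷` and `▷⁻¹` satisfying
axioms A1, A2, A3. -/
class PaperQuandle (Q : Type*) where
  rhd : Q → Q → Q
  rhdInv : Q → Q → Q
  fix : ∀ x : Q, rhd x x = x
  inv_rhd : ∀ x y : Q, rhdInv (rhd x y) y = x
  rhd_inv : ∀ x y : Q, rhd (rhdInv x y) y = x
  self_distrib : ∀ x y z : Q, rhd (rhd x y) z = rhd (rhd x z) (rhd y z)

infixl:65 " ▷ " => PaperQuandle.rhd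
infixl:65 " ▷⁻¹ " => PaperQuandle.rhdInv

/-- The point symmetry at `u`, as a permutation of `Q`: `x ↦ x ▷ u`,
with inverse `x ↦ x ▷⁻¹ u`. -/
def ptSym {Q : Type*} [PaperQuandle Q] (u : Q) : Equiv.Perm Q where
  toFun x := x ▷ u
  invFun x := x ▷⁻¹ u
  left_inv x := PaperQuandle.inv_rhd x u
  right_inv x := PaperQuandle.rhd_inv x u

/-- The element `x_{p,q,r} = a^{(ba)^t c^q d^r}` if `p = 2t`, and
`a^{(ba)^t b c^q d^r}` if `p = 2t+1`.  Here the word `ba` (apply `b`, then `a`)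
is the permutation `ptSym a * ptSym b`. -/
def X {Q : Type*} [PaperQuandle Q] (a b c d : Q) (p q r : ℤ) : Q :=
  if Even p then
    (ptSym d ^ r) ((ptSym c ^ q) (((ptSym a * ptSym b) ^ (p / 2)) a))
  else
    (ptSym d ^ r) ((ptSym c ^ q) ((((ptSym a * ptSym b) ^ ((p - 1) / 2)) a) ▷ b))

theorem stmt_11
    {Q : Type*} [PaperQuandle Q] (k : ℤ) (m n : ℕ) (a b c d e f : Q)
    (hk : 1 ≤ k) (hm : 0 < m) (hn : 0 < n)
    (rel_a : ∀ x : Q, x ▷ a ▷ a = x)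
    (rel_b : ∀ x : Q, x ▷ b ▷ b = x)
    (rel_e : ∀ x : Q, x ▷ e ▷ e = x)
    (rel_f : ∀ x : Q, x ▷ f ▷ f = x)
    (rel_c : ∀ x : Q, (ptSym c ^ m) x = x)
    (rel_d : ∀ x : Q, (ptSym d ^ n) x = x)
    (rel_dea : ∀ x : Q, x ▷ d ▷ e ▷ a = x)
    (rel_bdf : ∀ x : Q, x ▷ b ▷ d ▷ f = x)
    (rel_cke : ∀ x : Q, (((ptSym b * ptSym a) ^ k) (x ▷ c)) ▷ a ▷ e = x)
    (rel_fca : ∀ x : Q, (((ptSym b * ptSym a) ^ (k - 1)) (x ▷ f ▷ c)) ▷ a = x)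
    (hko : Odd k) :
    ∀ q r : ℤ, X a b c d k q r = X a b c d (k - 1) (q - 1) (r - 1) := by
  intro q r
  set A := ptSym a with hAdef
  set B := ptSym b with hBdef
  set C := ptSym c with hCdef
  set D := ptSym d with hDdef
  set E := ptSym e with hEdef
  set F := ptSym f with hFdef
  set P : Equiv.Perm Q := A * B with hPdef
  have hA : A * A = 1 := Equiv.ext fun x => rel_a x
  have hB : B * B = 1 := Equiv.ext fun x => rel_b x
  have hE : E * E = 1 := Equiv.ext fun x => rel_e x
  have hF : F * F = 1 := Equiv.ext fun x => rel_f x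
  have hAED : A * E * D = 1 := Equiv.ext fun x => rel_dea x
  have hFDB : F * D * B = 1 := Equiv.ext fun x => rel_bdf x
  have hCKE : E * A * (B * A) ^ k * C = 1 := Equiv.ext fun x => rel_cke x
  have hAi : A⁻¹ = A := inv_eq_of_mul_eq_one_right hA
  have hBi : B⁻¹ = B := inv_eq_of_mul_eq_one_right hB
  have hEi : E⁻¹ = E := inv_eq_of_mul_eq_one_right hE
  have hFi : F⁻¹ = F := inv_eq_of_mul_eq_one_right hF
  -- D = E * A
  have hDEA : D = E * A := by
    have h1 : (A * E) * D = 1 := by rw [mul_assoc]; exact hAED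
    have := eq_inv_of_mul_eq_one_right h1
    rw [this, mul_inv_rev, hAi, hEi]
  have hDi : D⁻¹ = A * E := by rw [hDEA, mul_inv_rev, hAi, hEi]
  -- B * D * B = D⁻¹  (from F*D*B = 1 and F² = 1)
  have hDBF : D * B = F := by
    have h1 : F * (D * B) = 1 := by rw [← mul_assoc]; exact hFDB
    have h2 := inv_eq_of_mul_eq_one_right h1
    rw [← h2, hFi]
  have hBDB : B * D * B = D⁻¹ := by
    have h1 : (D * B) * (D * B) = 1 := by rw [hDBF]; exact hF
    have h2 : D * (B * D * B) = 1 := by rw [← h1]; group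
    exact eq_inv_of_mul_eq_one_right h2
  have hADA : A * D * A = D⁻¹ := by
    rw [hDi, hDEA]; simp only [mul_assoc, hA, mul_one]
  -- P commutes with D
  have hPD : Commute P D := by
    have hBD : B * D = D⁻¹ * B := by
      have h1 : (B * D * B) * B = D⁻¹ * B := by rw [hBDB]
      simpa only [mul_assoc, hB, mul_one] using h1
    have hADi : A * D⁻¹ = D * A := by
      calc A * D⁻¹ = A * (A * D * A) := by rw [hADA]
        _ = D * A := by simp only [← mul_assoc, hA, one_mul]
    show P * D = D * P
    rw [hPdef, mul_assoc, hBD, ← mul_assoc, hADi, mul_assoc]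
  -- C = P^k * D⁻¹
  have hBAi : (B * A)⁻¹ = P := by rw [mul_inv_rev, hAi, hBi, hPdef]
  have hC : C = P ^ k * D⁻¹ := by
    have h1 : (E * A * (B * A) ^ k) * C = 1 := by
      exact hCKE
    have h2 := eq_inv_of_mul_eq_one_right h1
    rw [h2, mul_inv_rev, mul_inv_rev, ← inv_zpow, hBAi, hAi, hEi, hDi]
  have hPkD : Commute (P ^ k) D := hPD.zpow_left k
  have hCD : Commute C D := by rw [hC]; exact hPkD.mul_left (Commute.inv_left (Commute.refl D))
  have hDC : D * C = P ^ k := by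
    rw [hC, ← mul_assoc, ← hPkD.eq, mul_assoc, mul_inv_cancel, mul_one]
  -- B conjugates P to P⁻¹
  have hBP : ∀ s : ℤ, B * P ^ s = P ^ (-s) * B := by
    intro s
    have hsc : SemiconjBy B P P⁻¹ := by
      show B * P = P⁻¹ * B
      rw [hPdef, mul_inv_rev, hAi, hBi, ← mul_assoc]
    have h2 := hsc.zpow_right s
    have : B * P ^ s = (P⁻¹) ^ s * B := h2.eq
    rwa [inv_zpow, ← zpow_neg] at this
  -- get t with k = 2t+1
  obtain ⟨t, ht⟩ := hko
  have hkt : (k - 1) / 2 = t := by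
    have h2 : k - 1 = 2 * t := by omega
    rw [h2, Int.mul_ediv_cancel_left _ (by norm_num)]
  have hnek : ¬ Even k := by
    rw [← Int.not_odd_iff_even]; simp only [not_not]; exact ⟨t, ht⟩
  have hek : Even (k - 1) := by
    refine ⟨t, by omega⟩
  -- unfold X
  rw [X, X, if_neg hnek, if_pos hek, hkt]
  -- goal is now in terms of A,B,C,D,P
  show (D ^ r) ((C ^ q) (B ((P ^ t) a))) = (D ^ (r-1)) ((C ^ (q-1)) ((P ^ t) a))
  have key : (D ^ r * C ^ q * B * P ^ t) = (D ^ (r-1) * C ^ (q-1) * P ^ t * (P * B)) := by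
    have hDCq : D * C ^ (q-1) = C ^ (q-1) * D := (hCD.zpow_left (q-1)).symm.eq
    calc D ^ r * C ^ q * B * P ^ t
        = D ^ (r-1) * (D * C ^ (q-1)) * C * B * P ^ t := by
          rw [show D ^ r = D ^ (r-1) * D by rw [← zpow_add_one]; ring_nf,
              show C ^ q = C ^ (q-1) * C by rw [← zpow_add_one]; ring_nf]
          group
      _ = D ^ (r-1) * C ^ (q-1) * (D * C) * B * P ^ t := by rw [hDCq]; group
      _ = D ^ (r-1) * C ^ (q-1) * P ^ k * (B * P ^ t) := by rw [hDC]; group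
      _ = D ^ (r-1) * C ^ (q-1) * P ^ k * (P ^ (-t) * B) := by rw [hBP]
      _ = D ^ (r-1) * C ^ (q-1) * (P ^ k * P ^ (-t)) * B := by group
      _ = D ^ (r-1) * C ^ (q-1) * P ^ (t+1) * B := by rw [← zpow_add, show k + -t = t + 1 by omega]
      _ = D ^ (r-1) * C ^ (q-1) * P ^ t * (P * B) := by rw [show (t+1 : ℤ) = t + 1 from rfl, zpow_add_one]; group
  have hPBa : (P * B) a = a := by
    show P (B a) = a
    rw [hPdef]
    show A (B (B a)) = a
    show ((a ▷ b) ▷ b) ▷ a = a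
    rw [rel_b a]
    exact PaperQuandle.fix a
  calc (D ^ r) ((C ^ q) (B ((P ^ t) a)))
      = (D ^ r * C ^ q * B * P ^ t) a := by simp [Equiv.Perm.mul_apply]
    _ = (D ^ (r-1) * C ^ (q-1) * P ^ t * (P * B)) a := by rw [key]
    _ = (D ^ (r-1)) ((C ^ (q-1)) ((P ^ t) ((P * B) a))) := by simp [Equiv.Perm.mul_apply]
    _ = (D ^ (r-1)) ((C ^ (q-1)) ((P ^ t) a)) := by rw [hPBa]
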